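/- Let F be an algebraically closed field of characteristic 0 and suppose f : S_m → F satisfies: the polynomial q(X) = Σ_{π ∈ S_m} f(π) Π_i x_{π(i),i} vanishes on all m×m matrices of rank ≤ n over F. If moreover for every decomposition q = Σ_{I,J, |I|=|J|=n+1} q_{I,J} det(X_{I,J}) each monomial of q has degree exactly 1 in each row and each column of X, then the coefficients q_{I,J} can be chosen multilinear: of total degree 1 in the rows not in I and degree 0 in rows in I (similarly for columns and J). -/

import Mathlib

set_option linter.unusedSectionVars false
set_option linter.unusedVariables false
set_option maxHeartbeats 1000000

open MvPolynomial

/-- The generic `m×m` matrix of indeterminates. -/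
noncomputable def genMatrix (F : Type*) [Field F] (m : ℕ) :
    Matrix (Fin m) (Fin m) (MvPolynomial (Fin m × Fin m) F) :=
  fun i j => MvPolynomial.X (i, j)

namespace SFT

open Finset Equiv

variable {F : Type*} [Field F] [CharZero F] {m n : ℕ}

/-- Positional weight. -/
def wgt (m : ℕ) (c : Fin m) : ℕ := (m+1)^(m - 1 - (c : ℕ))

/-- Lex encoding of a permutation (as a value sequence). -/
def phi (σ : Perm (Fin m)) : ℕ := ∑ c, (σ c : ℕ) * wgt m c

lemma geo (m : ℕ) : ∀ k : ℕ, m * (∑ j ∈ Finset.range k, (m+1)^j) + 1 = (m+1)^k := by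
  intro k
  induction k with
  | zero => simp
  | succ k ih =>
    rw [Finset.sum_range_succ, mul_add, pow_succ]
    nlinarith [ih]

lemma tail_lt (A : Fin m → Fin m) (p : Fin m) :
    ∑ c ∈ univ.filter (fun c => p < c), (A c : ℕ) * wgt m c < wgt m p := by
  have hm : 0 < m := p.pos
  have h1 : ∑ c ∈ univ.filter (fun c => p < c), (A c : ℕ) * wgt m c
      ≤ ∑ c ∈ univ.filter (fun c => p < c), m * wgt m c := by
    apply Finset.sum_le_sum
    intro c _
    exact Nat.mul_le_mul_right _ (le_of_lt (A c).2)
  have h2 : ∑ c ∈ univ.filter (fun c => p < c), wgt m c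
      = ∑ j ∈ Finset.range (m - 1 - (p : ℕ)), (m+1)^j := by
    refine Finset.sum_nbij' (fun c => m - 1 - (c : ℕ)) (fun j => ⟨m - 1 - j, by omega⟩)
      ?_ ?_ ?_ ?_ ?_
    · intro c hc
      simp only [Finset.mem_filter, Finset.mem_univ, true_and, Fin.lt_def] at hc
      simp only [Finset.mem_range]
      have := c.2
      omega
    · intro j hj
      simp only [Finset.mem_range] at hj
      simp only [Finset.mem_filter, Finset.mem_univ, true_and, Fin.lt_def]
      have := p.2
      omega
    · intro c hc
      simp only [Finset.mem_filter, Finset.mem_univ, true_and, Fin.lt_def] at hc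
      have := c.2
      exact Fin.ext (by simp; omega)
    · intro j hj
      simp only [Finset.mem_range] at hj
      simp only []
      omega
    · intro c hc
      rfl
  calc ∑ c ∈ univ.filter (fun c => p < c), (A c : ℕ) * wgt m c
      ≤ m * ∑ c ∈ univ.filter (fun c => p < c), wgt m c := by
        rw [Finset.mul_sum]; exact h1
    _ < wgt m p := by
        rw [h2, wgt]
        have := geo m (m - 1 - (p : ℕ))
        omega

lemma phi_split (p : Fin m) (ρ : Perm (Fin m)) :
    phi ρ = (∑ c ∈ univ.filter (fun c => c < p), (ρ c : ℕ) * wgt m c)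
      + ((ρ p : ℕ) * wgt m p + ∑ c ∈ univ.filter (fun c => p < c), (ρ c : ℕ) * wgt m c) := by
  classical
  rw [phi, ← Finset.sum_filter_add_sum_filter_not univ (fun c => c < p)]
  congr 1
  have h : univ.filter (fun c => ¬ c < p) = insert p (univ.filter (fun c => p < c)) := by
    ext c
    simp only [Finset.mem_filter, Finset.mem_univ, true_and, Finset.mem_insert, not_lt]
    constructor
    · intro h
      rcases lt_or_eq_of_le h with h | h
      · right; exact h
      · left; exact h.symm
    · rintro (rfl | h)
      · exact le_refl _
      · exact le_of_lt h
  rw [h, Finset.sum_insert (by simp)]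

lemma lexmono {σ τ : Perm (Fin m)} (p : Fin m)
    (hpre : ∀ c, c < p → σ c = τ c) (hp : σ p < τ p) : phi σ < phi τ := by
  classical
  rw [phi_split p σ, phi_split p τ]
  have hpre' : ∑ c ∈ univ.filter (fun c => c < p), (σ c : ℕ) * wgt m c
      = ∑ c ∈ univ.filter (fun c => c < p), (τ c : ℕ) * wgt m c := by
    apply Finset.sum_congr rfl
    intro c hc
    simp only [Finset.mem_filter] at hc
    rw [hpre c hc.2]
  rw [hpre']
  have h1 : ∑ c ∈ univ.filter (fun c => p < c), (σ c : ℕ) * wgt m c < wgt m p := tail_lt _ p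
  have h2 : ((σ p : ℕ) + 1) * wgt m p ≤ (τ p : ℕ) * wgt m p :=
    Nat.mul_le_mul_right _ hp
  have h3 : (0:ℕ) ≤ ∑ c ∈ univ.filter (fun c => p < c), (τ c : ℕ) * wgt m c := Nat.zero_le _
  have h4 : (σ p : ℕ) * wgt m p + wgt m p = ((σ p : ℕ) + 1) * wgt m p := by ring
  omega

lemma phi_lt_top (σ : Perm (Fin m)) : phi σ < (m+1)^m := by
  have h0 : phi σ ≤ ∑ c : Fin m, m * wgt m c := by
    apply Finset.sum_le_sum
    intro c _
    exact Nat.mul_le_mul_right _ (le_of_lt (σ c).2)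
  have h2 : ∑ c : Fin m, wgt m c = ∑ j ∈ Finset.range m, (m+1)^j := by
    calc ∑ c : Fin m, wgt m c = ∑ j ∈ Finset.range m, (m+1)^(m-1-j) :=
          Fin.sum_univ_eq_sum_range (fun j => (m+1)^(m-1-j)) m
      _ = ∑ j ∈ Finset.range m, (m+1)^j := Finset.sum_range_reflect _ m
  have h3 := geo m m
  calc phi σ ≤ m * ∑ c : Fin m, wgt m c := by rw [Finset.mul_sum]; exact h0
    _ = m * ∑ j ∈ Finset.range m, (m+1)^j := by rw [h2]
    _ < (m+1)^m := by omega

/-- The minimal moved point of a nontrivial permutation is moved forward,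
and everything before it is fixed. -/
lemma exists_min_moved {τ : Perm (Fin m)} (hτ : τ ≠ 1) :
    ∃ p, (∀ c, c < p → τ c = c) ∧ p < τ p := by
  classical
  have hne : (univ.filter (fun c => τ c ≠ c)).Nonempty := by
    by_contra h
    apply hτ
    simp only [Finset.not_nonempty_iff_eq_empty, Finset.filter_eq_empty_iff] at h
    exact Equiv.ext fun c => not_not.mp (h (Finset.mem_univ c))
  obtain ⟨p, hp, hmin⟩ := Finset.exists_min_image _ id hne
  simp only [Finset.mem_filter, Finset.mem_univ, true_and] at hp
  have hfixlt : ∀ c, c < p → τ c = c := by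
    intro c hc
    by_contra h
    have := hmin c (by simp [h])
    simp only [id] at this
    exact absurd hc (not_lt.mpr this)
  refine ⟨p, hfixlt, ?_⟩
  rcases lt_trichotomy p (τ p) with h | h | h
  · exact h
  · exact absurd h.symm hp
  · exfalso
    have hfix : τ (τ p) = τ p := hfixlt (τ p) h
    exact hp (τ.injective hfix)

lemma phi_mul_gt {ι : Type*} (h : Fin m → ι) (σ τ : Perm (Fin m))
    (hstab : ∀ c, h (τ c) = h c)
    (hinc : ∀ c d : Fin m, c < d → h c = h d → σ c < σ d)
    (hτ : τ ≠ 1) : phi σ < phi (σ * τ) := by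
  obtain ⟨p, hpre, hp⟩ := exists_min_moved hτ
  apply lexmono p
  · intro c hc
    simp [Perm.mul_apply, hpre c hc]
  · simp only [Perm.mul_apply]
    exact hinc p (τ p) hp (hstab p).symm

lemma phi_mul_lt {k : ℕ} (σ : Perm (Fin m)) (e : Fin k ↪ Fin m)
    (he : StrictMono e)
    (hanti : ∀ a b : Fin k, a < b → σ (e b) < σ (e a))
    (w : Perm (Fin k)) (hw : w ≠ 1) : phi (σ * w.viaEmbedding e) < phi σ := by
  set τ := w.viaEmbedding e with hτdef
  have hτ : τ ≠ 1 := by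
    intro hcon
    apply hw
    obtain ⟨b, hb⟩ : ∃ b, w b ≠ b := by
      by_contra hcon2
      push_neg at hcon2
      exact hw (Equiv.ext fun b => hcon2 b)
    exfalso
    have : τ (e b) = e (w b) := Perm.viaEmbedding_apply w e b
    rw [hcon] at this
    simp only [Perm.one_apply] at this
    exact hb (e.injective this.symm)
  obtain ⟨p, hpre, hp⟩ := exists_min_moved hτ
  have hpr : p ∈ Set.range e := by
    by_contra hcon
    have := Perm.viaEmbedding_apply_of_notMem w e p hcon
    rw [this] at hp
    exact lt_irrefl _ hp
  obtain ⟨a, rfl⟩ := hpr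
  have hwa : τ (e a) = e (w a) := Perm.viaEmbedding_apply w e a
  have haw : a < w a := by
    rw [hwa] at hp
    exact he.lt_iff_lt.mp hp
  apply lexmono (e a)
  · intro c hc
    simp [Perm.mul_apply, hpre c hc]
  · simp only [Perm.mul_apply, hwa]
    exact hanti a (w a) haw
/-- Sign of a permutation as a field element. -/
def sgnF (F : Type*) [Field F] {k : ℕ} (w : Perm (Fin k)) : F := ((Perm.sign w : ℤ) : F)

/-- The generator `π · ε_T` viewed as a function on permutations. -/
noncomputable def gen (F : Type*) [Field F] {m n : ℕ} (π : Perm (Fin m))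
    (e : Fin (n+1) ↪ Fin m) : Perm (Fin m) → F := fun μ =>
  ∑ w : Perm (Fin (n+1)), if μ = π * w.viaEmbedding e then sgnF F w else 0

lemma gen_apply (π : Perm (Fin m)) (e : Fin (n+1) ↪ Fin m) (μ : Perm (Fin m)) :
    gen F π e μ = ∑ w : Perm (Fin (n+1)),
      if μ = π * w.viaEmbedding e then sgnF F w else 0 := rfl

/-- The stabilizer of a coloring, as a finset of permutations. -/
def stab (h : Fin m → Fin n) : Finset (Perm (Fin m)) :=
  univ.filter (fun τ => ∀ c, h (τ c) = h c)

lemma one_mem_stab (h : Fin m → Fin n) : (1 : Perm (Fin m)) ∈ stab h := by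
  simp [stab]

lemma mul_mem_stab {h : Fin m → Fin n} {x τ : Perm (Fin m)}
    (hx : x ∈ stab h) (hτ : τ ∈ stab h) : x * τ ∈ stab h := by
  simp only [stab, Finset.mem_filter, Finset.mem_univ, true_and] at *
  intro c
  rw [Perm.mul_apply, hx (τ c), hτ c]

/-- The key linear conditions satisfied by multilinear identities of rank `≤ n` matrices. -/
def Star (F : Type*) [Field F] (m n : ℕ) (f : Perm (Fin m) → F) : Prop :=
  ∀ (h : Fin m → Fin n) (π : Perm (Fin m)), ∑ τ ∈ stab h, f (π * τ) = 0

/-- Generators satisfy the linear conditions. -/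
lemma gen_star (π₀ : Perm (Fin m)) (e : Fin (n+1) ↪ Fin m) :
    Star F m n (gen F π₀ e) := by
  intro h π'
  classical
  have hrw : ∑ τ ∈ stab h, gen F π₀ e (π' * τ)
      = ∑ w : Perm (Fin (n+1)),
          if π'⁻¹ * (π₀ * w.viaEmbedding e) ∈ stab h then sgnF F w else 0 := by
    rw [Finset.sum_congr rfl (fun τ _ => gen_apply π₀ e (π' * τ)), Finset.sum_comm]
    apply Finset.sum_congr rfl
    intro w _
    have hcongr : ∀ τ : Perm (Fin m), (if π' * τ = π₀ * w.viaEmbedding e then sgnF F w else 0)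
        = (if τ = π'⁻¹ * (π₀ * w.viaEmbedding e) then sgnF F w else 0) := by
      intro τ
      by_cases hc : τ = π'⁻¹ * (π₀ * w.viaEmbedding e)
      · rw [if_pos (by rw [hc]; group), if_pos hc]
      · rw [if_neg (fun hcon => hc (by rw [← hcon]; group)), if_neg hc]
    rw [Finset.sum_congr rfl (fun τ _ => hcongr τ)]
    exact Finset.sum_ite_eq' (stab h) _ (fun _ => sgnF F w)
  rw [hrw]
  -- pigeonhole: two positions of `e` share a color
  obtain ⟨b, b', hbb', hcol⟩ : ∃ b b', b ≠ b' ∧ h (e b) = h (e b') := by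
    obtain ⟨b, b', hne, heq⟩ := Fintype.exists_ne_map_eq_of_card_lt
      (fun b : Fin (n+1) => h (e b)) (by simp)
    exact ⟨b, b', hne, heq⟩
  set t := Equiv.swap b b' with ht
  have htmem : t.viaEmbedding e ∈ stab h := by
    simp only [stab, Finset.mem_filter, Finset.mem_univ, true_and]
    intro c
    by_cases hc : c ∈ Set.range e
    · obtain ⟨a, rfl⟩ := hc
      rw [Perm.viaEmbedding_apply]
      rcases Equiv.swap_apply_def b b' a with _
      by_cases hab : a = b
      · subst hab; rw [ht, Equiv.swap_apply_left]; exact hcol.symm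
      by_cases hab' : a = b'
      · subst hab'; rw [ht, Equiv.swap_apply_right]; exact hcol
      · rw [ht, Equiv.swap_apply_of_ne_of_ne hab hab']
    · rw [Perm.viaEmbedding_apply_of_notMem _ _ _ hc]
  have hviamul : ∀ w : Perm (Fin (n+1)),
      (w * t).viaEmbedding e = w.viaEmbedding e * t.viaEmbedding e := by
    intro w
    rw [← Perm.viaEmbeddingHom_apply, ← Perm.viaEmbeddingHom_apply, ← Perm.viaEmbeddingHom_apply,
      map_mul]
  have hPiff : ∀ w : Perm (Fin (n+1)),
      (π'⁻¹ * (π₀ * (w * t).viaEmbedding e) ∈ stab h)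
        ↔ (π'⁻¹ * (π₀ * w.viaEmbedding e) ∈ stab h) := by
    intro w
    rw [hviamul]
    constructor
    · intro hmem
      have := mul_mem_stab hmem htmem
      have heq : π'⁻¹ * (π₀ * (w.viaEmbedding e * t.viaEmbedding e)) * t.viaEmbedding e
          = π'⁻¹ * (π₀ * (w.viaEmbedding e * (t.viaEmbedding e * t.viaEmbedding e))) := by group
      rw [heq] at this
      have htt : t.viaEmbedding e * t.viaEmbedding e = 1 := by
        rw [← hviamul t, ht, Equiv.swap_mul_self, ← Perm.viaEmbeddingHom_apply, map_one]
      rw [htt, mul_one] at this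
      exact this
    · intro hmem
      have heq : π'⁻¹ * (π₀ * (w.viaEmbedding e * t.viaEmbedding e))
          = (π'⁻¹ * (π₀ * w.viaEmbedding e)) * t.viaEmbedding e := by group
      rw [heq]
      exact mul_mem_stab hmem htmem
  apply Finset.sum_ninvolution (fun w => w * t)
  · intro w
    by_cases hP : π'⁻¹ * (π₀ * w.viaEmbedding e) ∈ stab h
    · rw [if_pos hP, if_pos ((hPiff w).mpr hP)]
      have : sgnF F (w * t) = - sgnF F w := by
        rw [sgnF, sgnF]
        rw [Perm.sign_mul, Perm.sign_swap hbb']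
        push_cast
        ring
      rw [this]; ring
    · rw [if_neg hP, if_neg (fun hcon => hP ((hPiff w).mp hcon))]
      ring
  · intro w hne hcon
    have : t = 1 := by
      have := congrArg (fun u => w⁻¹ * u) hcon
      simpa [mul_assoc] using this
    exact hbb' (Equiv.swap_eq_one_iff.mp this)
  · intro w; exact Finset.mem_univ _
  · intro w
    rw [mul_assoc, ht, Equiv.swap_mul_self, mul_one]

/-- Permutations with no decreasing subsequence of length `n+1`. -/
def Bounded (n : ℕ) {m : ℕ} (σ : Perm (Fin m)) : Prop :=
  ¬ ∃ g : Fin (n+1) → Fin m, StrictMono g ∧ ∀ a b : Fin (n+1), a < b → σ (g b) < σ (g a)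

/-- The span of the generators. -/
noncomputable def gspan (F : Type*) [Field F] (m n : ℕ) : Submodule F (Perm (Fin m) → F) :=
  Submodule.span F
    (Set.range (fun γ : Perm (Fin m) × (Fin (n+1) ↪ Fin m) => gen F γ.1 γ.2))

lemma gen_self (π : Perm (Fin m)) (e : Fin (n+1) ↪ Fin m) : gen F π e π = 1 := by
  rw [gen]
  rw [Finset.sum_eq_single_of_mem 1 (Finset.mem_univ _)]
  · rw [if_pos (by rw [← Perm.viaEmbeddingHom_apply, map_one, mul_one]), sgnF]
    simp
  · intro w _ hw
    rw [if_neg]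
    intro hcon
    apply hw
    have h1 : w.viaEmbedding e = 1 := by
      have h2 : π * 1 = π * w.viaEmbedding e := by rw [mul_one, ← hcon]
      exact (mul_left_cancel h2).symm
    have h2 : (Perm.viaEmbeddingHom e) w = (Perm.viaEmbeddingHom e) 1 := by
      rw [Perm.viaEmbeddingHom_apply, h1, map_one]
    exact Perm.viaEmbeddingHom_injective e h2

lemma gen_supp_lt (σ : Perm (Fin m)) (e : Fin (n+1) ↪ Fin m)
    (he : StrictMono e) (hanti : ∀ a b : Fin (n+1), a < b → σ (e b) < σ (e a))
    (μ : Perm (Fin m)) (hμ : μ ≠ σ) (hne : gen F σ e μ ≠ 0) : phi μ < phi σ := by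
  rw [gen] at hne
  obtain ⟨w, _, hw⟩ := Finset.exists_ne_zero_of_sum_ne_zero hne
  by_cases hc : μ = σ * w.viaEmbedding e
  · subst hc
    have hw1 : w ≠ 1 := by
      intro h1
      apply hμ
      rw [h1, ← Perm.viaEmbeddingHom_apply, map_one, mul_one]
    exact phi_mul_lt σ e he hanti w hw1
  · rw [if_neg hc] at hw
    exact absurd rfl hw

lemma unbounded_choice {σ : Perm (Fin m)} (h : ¬ Bounded n σ) :
    ∃ e : Fin (n+1) ↪ Fin m, StrictMono e ∧
      ∀ a b : Fin (n+1), a < b → σ (e b) < σ (e a) := by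
  rw [Bounded, not_not] at h
  obtain ⟨g, hg, hanti⟩ := h
  exact ⟨⟨g, hg.injective⟩, hg, hanti⟩

lemma straighten_aux : ∀ (k : ℕ) (f : Perm (Fin m) → F),
    (∀ μ, ¬ Bounded n μ → f μ ≠ 0 → phi μ < k) →
    ∃ d ∈ gspan F m n, ∀ μ, (f - d) μ ≠ 0 → Bounded n μ := by
  intro k
  induction k with
  | zero =>
    intro f hf
    refine ⟨0, Submodule.zero_mem _, ?_⟩
    intro μ hμ
    simp only [Pi.sub_apply, Pi.zero_apply, sub_zero] at hμ
    by_contra hB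
    exact absurd (hf μ hB hμ) (by omega)
  | succ k ih =>
    intro f hf
    classical
    set s : Finset (Perm (Fin m)) :=
      univ.filter (fun σ => ¬ Bounded n σ ∧ f σ ≠ 0 ∧ phi σ = k) with hs
    have hmem : ∀ σ ∈ s, ¬ Bounded n σ ∧ f σ ≠ 0 ∧ phi σ = k := by
      intro σ hσ
      simpa [hs] using hσ
    set E : ∀ σ ∈ s, (Fin (n+1) ↪ Fin m) :=
      fun σ hσ => Classical.choose (unbounded_choice (hmem σ hσ).1) with hE
    have hEspec : ∀ σ (hσ : σ ∈ s), StrictMono (E σ hσ) ∧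
        ∀ a b : Fin (n+1), a < b → σ ((E σ hσ) b) < σ ((E σ hσ) a) :=
      fun σ hσ => Classical.choose_spec (unbounded_choice (hmem σ hσ).1)
    set d₀ : Perm (Fin m) → F :=
      ∑ σ ∈ s.attach, f σ.1 • gen F σ.1 (E σ.1 σ.2) with hd₀
    have hd₀mem : d₀ ∈ gspan F m n := by
      apply Submodule.sum_mem
      intro σ _
      apply Submodule.smul_mem
      apply Submodule.subset_span
      exact ⟨(σ.1, E σ.1 σ.2), rfl⟩
    have hd₀apply : ∀ μ, d₀ μ = ∑ σ ∈ s.attach, f σ.1 * gen F σ.1 (E σ.1 σ.2) μ := by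
      intro μ
      rw [hd₀, Finset.sum_apply]
      rfl
    have key : ∀ μ, ¬ Bounded n μ → (f - d₀) μ ≠ 0 → phi μ < k := by
      intro μ hB hne
      by_contra hk
      push_neg at hk
      have hterm : ∀ σ (hσ : σ ∈ s), f σ * gen F σ (E σ hσ) μ
          = if μ = σ then f σ else 0 := by
        intro σ hσ
        by_cases hc : μ = σ
        · subst hc
          rw [gen_self, mul_one, if_pos rfl]
        · rw [if_neg hc]
          by_cases hg : gen F σ (E σ hσ) μ = 0
          · rw [hg, mul_zero]
          · exfalso
            have := gen_supp_lt σ (E σ hσ) (hEspec σ hσ).1 (hEspec σ hσ).2 μ hc hg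
            rw [(hmem σ hσ).2.2] at this
            omega
      have hd₀μ : d₀ μ = if μ ∈ s then f μ else 0 := by
        rw [hd₀apply]
        rw [Finset.sum_congr rfl (fun σ _ => hterm σ.1 σ.2)]
        rw [Finset.sum_attach s (fun σ => if μ = σ then f σ else 0)]
        have : ∀ σ ∈ s, (if μ = σ then f σ else 0) = (if σ = μ then f σ else 0) := by
          intro σ _
          by_cases hc : μ = σ
          · rw [if_pos hc, if_pos hc.symm]
          · rw [if_neg hc, if_neg (fun hcc => hc hcc.symm)]
        rw [Finset.sum_congr rfl this]
        exact Finset.sum_ite_eq' s μ (fun σ => f σ)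
      by_cases hμs : μ ∈ s
      · apply hne
        simp only [Pi.sub_apply, hd₀μ, if_pos hμs]
        ring
      · have hfμ : f μ ≠ 0 := by
          intro h0
          apply hne
          simp only [Pi.sub_apply, hd₀μ, if_neg hμs, h0, sub_zero]
        have hlt := hf μ hB hfμ
        have : phi μ = k := by omega
        apply hμs
        simp [hs, hB, hfμ, this]
      -- done
    obtain ⟨d', hd'mem, hd'⟩ := ih (f - d₀) key
    refine ⟨d₀ + d', Submodule.add_mem _ hd₀mem hd'mem, ?_⟩
    intro μ hμ
    apply hd' μ
    intro hcon
    apply hμ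
    simp only [Pi.sub_apply, Pi.add_apply] at *
    linear_combination hcon

section Dilworth
variable (σ : Perm (Fin m))

/-- Decreasing subsets ending at `c`. -/
noncomputable def Dsets (c : Fin m) : Finset (Finset (Fin m)) := by
  classical
  exact univ.powerset.filter
    (fun S => c ∈ S ∧ (∀ a ∈ S, a ≤ c) ∧ ∀ a ∈ S, ∀ b ∈ S, a < b → σ b < σ a)

lemma singleton_mem_Dsets (c : Fin m) : {c} ∈ Dsets σ c := by
  simp only [Dsets, Finset.mem_filter, Finset.mem_powerset]
  refine ⟨Finset.subset_univ _, Finset.mem_singleton_self c, ?_, ?_⟩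
  · intro a ha; rw [Finset.mem_singleton] at ha; exact le_of_eq ha
  · intro a ha b hb hab
    rw [Finset.mem_singleton] at ha hb
    subst ha; subst hb; exact absurd hab (lt_irrefl _)

lemma Dsets_nonempty (c : Fin m) : (Dsets σ c).Nonempty := ⟨{c}, singleton_mem_Dsets σ c⟩

/-- Length of the longest decreasing subsequence ending at `c`. -/
noncomputable def ell (c : Fin m) : ℕ := (Dsets σ c).sup' (Dsets_nonempty σ c) Finset.card

lemma ell_pos (c : Fin m) : 1 ≤ ell σ c := by
  have := Finset.le_sup' (f := Finset.card) (singleton_mem_Dsets σ c)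
  simpa only [ell, Finset.card_singleton] using this

lemma ell_le (hB : Bounded n σ) (c : Fin m) : ell σ c ≤ n := by
  apply Finset.sup'_le
  intro S hS
  simp only [Dsets, Finset.mem_filter, Finset.mem_powerset] at hS
  obtain ⟨-, hcS, hle, hdec⟩ := hS
  by_contra hcard
  push_neg at hcard
  have hcard' : n + 1 ≤ S.card := hcard
  apply hB
  set iso := S.orderIsoOfFin (rfl : S.card = S.card) with hiso
  refine ⟨fun b => (iso ⟨b.1, by omega⟩ : Fin m), ?_, ?_⟩
  · intro a b hab
    have : (⟨a.1, by omega⟩ : Fin S.card) < ⟨b.1, by omega⟩ := hab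
    exact iso.strictMono this
  · intro a b hab
    apply hdec
    · exact (iso ⟨a.1, by omega⟩).2
    · exact (iso ⟨b.1, by omega⟩).2
    · exact iso.strictMono (show (⟨a.1, by omega⟩ : Fin S.card) < ⟨b.1, by omega⟩ from hab)

lemma ell_mono {c d : Fin m} (hcd : c < d) (heq : ell σ c = ell σ d) : σ c < σ d := by
  classical
  obtain ⟨S, hS, hSsup⟩ := Finset.exists_mem_eq_sup' (Dsets_nonempty σ c) Finset.card
  by_contra hcon
  push_neg at hcon
  have hne : σ d ≠ σ c := fun h => (ne_of_lt hcd) (σ.injective h.symm)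
  have hdc : σ d < σ c := lt_of_le_of_ne hcon hne
  simp only [Dsets, Finset.mem_filter, Finset.mem_powerset] at hS
  obtain ⟨-, hcS, hle, hdec⟩ := hS
  have hdS : d ∉ S := fun h => absurd hcd (not_lt.mpr (hle d h))
  have hmem : insert d S ∈ Dsets σ d := by
    simp only [Dsets, Finset.mem_filter, Finset.mem_powerset]
    refine ⟨Finset.subset_univ _, Finset.mem_insert_self _ _, ?_, ?_⟩
    · intro a ha
      rcases Finset.mem_insert.mp ha with rfl | ha
      · exact le_refl _
      · exact le_trans (hle a ha) (le_of_lt hcd)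
    · intro a ha b hb hab
      rcases Finset.mem_insert.mp hb with hb' | hb'
      · rcases Finset.mem_insert.mp ha with ha' | ha'
        · exfalso; rw [ha', hb'] at hab; exact lt_irrefl _ hab
        · rw [hb']
          rcases lt_or_eq_of_le (hle a ha') with h | h
          · exact lt_trans hdc (hdec a ha' c hcS h)
          · rw [h]; exact hdc
      · rcases Finset.mem_insert.mp ha with ha' | ha'
        · exfalso
          rw [ha'] at hab
          exact absurd hab (not_lt.mpr (le_trans (hle b hb') (le_of_lt hcd)))
        · exact hdec a ha' b hb' hab
  have hcard : (insert d S).card = S.card + 1 := Finset.card_insert_of_notMem hdS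
  have := Finset.le_sup' (f := Finset.card) hmem
  rw [hcard] at this
  have h1 : ell σ c = S.card := hSsup
  have h2 : ell σ d = (Dsets σ d).sup' (Dsets_nonempty σ d) Finset.card := rfl
  omega

end Dilworth

lemma indep (hmn : n + 1 ≤ m) (f : Perm (Fin m) → F) (hstar : Star F m n f)
    (hsupp : ∀ μ, f μ ≠ 0 → Bounded n μ) : f = 0 := by
  have main : ∀ (t : ℕ) (σ : Perm (Fin m)), (m+1)^m ≤ phi σ + t → f σ = 0 := by
    intro t
    induction t with
    | zero =>
      intro σ hσ
      exact absurd hσ (by have := phi_lt_top σ; omega)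
    | succ t ih =>
      intro σ hσ
      by_cases hB : Bounded n σ
      · -- Dilworth coloring
        have hm1 : 0 < m := by omega
        have hn1 : 1 ≤ n := by
          have h1 := ell_pos σ ⟨0, hm1⟩
          have h2 := ell_le σ hB ⟨0, hm1⟩
          omega
        set h : Fin m → Fin n := fun c =>
          ⟨ell σ c - 1, by have := ell_le σ hB c; have := ell_pos σ c; omega⟩ with hh
        have hinc : ∀ c d : Fin m, c < d → h c = h d → σ c < σ d := by
          intro c d hcd hcol
          apply ell_mono σ hcd
          have := congrArg Fin.val hcol
          simp only [hh] at this
          have h1 := ell_pos σ c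
          have h2 := ell_pos σ d
          omega
        have hsum := hstar h σ
        rw [Finset.sum_eq_single_of_mem 1 (one_mem_stab h)] at hsum
        · rw [mul_one] at hsum; exact hsum
        · intro τ hτ hτ1
          apply ih
          have hstabτ : ∀ c, h (τ c) = h c := by
            simpa [stab] using hτ
          have := phi_mul_gt h σ τ hstabτ hinc hτ1
          omega
      · by_contra hne
        exact hB (hsupp σ hne)
  ext σ
  exact main ((m+1)^m) σ (by omega)

/-- Products of variables as a single monomial. -/
lemma prod_X_eq_monomial {R : Type*} [CommSemiring R] {σ ι : Type*} (s : Finset ι)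
    (g : ι → σ) :
    (∏ c ∈ s, (X (g c) : MvPolynomial σ R))
      = monomial (∑ c ∈ s, Finsupp.single (g c) 1) 1 := by
  classical
  induction s using Finset.cons_induction with
  | empty => simp
  | cons a s ha ih =>
    rw [Finset.prod_cons, Finset.sum_cons, ih, MvPolynomial.X,
      MvPolynomial.monomial_mul, one_mul]

/-- The exponent pattern of the substituted monomial of `μ` w.r.t. a coloring `h`. -/
noncomputable def Eh (h : Fin m → Fin n) (μ : Perm (Fin m)) : (Fin n × Fin m) →₀ ℕ :=
  ∑ c, Finsupp.single (h c, μ c) 1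

lemma Eh_apply (h : Fin m → Fin n) (μ : Perm (Fin m)) (k : Fin n) (r : Fin m) :
    Eh h μ (k, r) = if h (μ⁻¹ r) = k then 1 else 0 := by
  classical
  rw [Eh, Finsupp.finset_sum_apply]
  rw [Finset.sum_eq_single_of_mem (μ⁻¹ r) (Finset.mem_univ _)]
  · rw [Finsupp.single_apply]
    by_cases hc : h (μ⁻¹ r) = k
    · rw [if_pos hc, if_pos (by rw [hc, Perm.coe_inv, Equiv.apply_symm_apply])]
    · rw [if_neg hc, if_neg (by
        intro hcon
        rw [Prod.mk.injEq] at hcon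
        exact hc hcon.1)]
  · intro c _ hc
    rw [Finsupp.single_apply, if_neg]
    intro hcon
    rw [Prod.mk.injEq] at hcon
    exact hc (by rw [← hcon.2, Perm.coe_inv, Equiv.symm_apply_apply])

lemma Eh_eq_iff (h : Fin m → Fin n) (μ π : Perm (Fin m)) :
    Eh h μ = Eh h π ↔ ∀ c, h ((π⁻¹ * μ) c) = h c := by
  constructor
  · intro heq c
    have happ := congrArg (fun E : (Fin n × Fin m) →₀ ℕ => E (h (μ⁻¹ (μ c)), μ c)) heq
    rw [Eh_apply, Eh_apply] at happ
    rw [Perm.coe_inv, Equiv.symm_apply_apply] at happ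
    rw [if_pos rfl] at happ
    by_cases hc : h (π⁻¹ (μ c)) = h c
    · simpa [Perm.mul_apply] using hc
    · rw [if_neg hc] at happ
      exact absurd happ one_ne_zero
  · intro hcond
    ext kr
    obtain ⟨k, r⟩ := kr
    rw [Eh_apply, Eh_apply]
    have : h (μ⁻¹ r) = h (π⁻¹ r) := by
      have := hcond (μ⁻¹ r)
      simp only [Perm.mul_apply, Perm.coe_inv, Equiv.apply_symm_apply] at this
      exact this.symm
    rw [this]

/-- Derivation of the linear conditions from vanishing on rank `≤ n` matrices. -/
lemma star_of_vanishing (f : Perm (Fin m) → F)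
    (hvan : ∀ M : Matrix (Fin m) (Fin m) F, M.rank ≤ n →
      eval (fun p : Fin m × Fin m => M p.1 p.2)
        (∑ π : Perm (Fin m), C (f π) * ∏ i, X (π i, i)) = 0) :
    Star F m n f := by
  intro h π
  classical
  set p : MvPolynomial (Fin n × Fin m) F :=
    ∑ μ : Perm (Fin m), C (f μ) * ∏ c, X (h c, μ c) with hp
  have hp0 : p = 0 := by
    apply MvPolynomial.funext
    intro y
    rw [map_zero]
    set M : Matrix (Fin m) (Fin m) F := fun r c => y (h c, r) with hM
    have hrank : M.rank ≤ n := by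
      set N : Matrix (Fin m) (Fin n) F := fun r k => y (k, r) with hN
      set P : Matrix (Fin n) (Fin m) F := fun k c => if k = h c then 1 else 0 with hP
      have hMNP : M = N * P := by
        ext r c
        rw [Matrix.mul_apply]
        simp only [hN, hP, mul_ite, mul_one, mul_zero]
        rw [Finset.sum_ite_eq' univ (h c) (fun k => y (k, r))]
        simp [hM]
      rw [hMNP]
      refine le_trans (Matrix.rank_mul_le_left N P) ?_
      simpa using N.rank_le_card_width
    have hv := hvan M hrank
    rw [map_sum] at hv
    rw [hp, map_sum]
    rw [← hv]
    apply Finset.sum_congr rfl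
    intro μ _
    rw [map_mul, map_mul, eval_C, eval_C, map_prod, map_prod]
    congr 1
    apply Finset.prod_congr rfl
    intro c _
    rw [eval_X, eval_X]
  have hpm : p = ∑ μ : Perm (Fin m), monomial (Eh h μ) (f μ) := by
    rw [hp]
    apply Finset.sum_congr rfl
    intro μ _
    rw [prod_X_eq_monomial, MvPolynomial.C_mul_monomial, mul_one]
    rfl
  have hcoeff : (0:F) = ∑ μ : Perm (Fin m), if Eh h μ = Eh h π then f μ else 0 := by
    have := congrArg (MvPolynomial.coeff (Eh h π)) hp0
    rw [hpm] at this
    rw [MvPolynomial.coeff_sum] at this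
    simp only [MvPolynomial.coeff_monomial, MvPolynomial.coeff_zero] at this
    exact this.symm
  rw [← Finset.sum_filter] at hcoeff
  rw [show (0:F) = ∑ μ ∈ univ.filter (fun μ => Eh h μ = Eh h π), f μ from hcoeff]
  apply Finset.sum_nbij' (fun τ => π * τ) (fun μ => π⁻¹ * μ)
  · intro τ hτ
    simp only [Finset.mem_filter, Finset.mem_univ, true_and]
    rw [Eh_eq_iff]
    intro c
    have : π⁻¹ * (π * τ) = τ := by group
    rw [this]
    have hτ' : ∀ c, h (τ c) = h c := by simpa [stab] using hτ
    exact hτ' c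
  · intro μ hμ
    simp only [Finset.mem_filter, Finset.mem_univ, true_and] at hμ
    rw [Eh_eq_iff] at hμ
    simp only [stab, Finset.mem_filter, Finset.mem_univ, true_and]
    exact hμ
  · intro τ _; group
  · intro μ _; group
  · intro τ _; rfl

/-- The monomial factor attached to `(π, e)`. -/
noncomputable def Mon (F : Type*) [Field F] {m n : ℕ} (π : Perm (Fin m))
    (e : Fin (n+1) ↪ Fin m) : MvPolynomial (Fin m × Fin m) F := by
  classical
  exact ∏ c ∈ univ.filter (fun c => c ∉ Set.range e), X (π c, c)

/-- Its exponent vector. -/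
noncomputable def Emon {m n : ℕ} (π : Perm (Fin m)) (e : Fin (n+1) ↪ Fin m) :
    (Fin m × Fin m) →₀ ℕ := by
  classical
  exact ∑ c ∈ univ.filter (fun c => c ∉ Set.range e), Finsupp.single (π c, c) 1

lemma Mon_eq_monomial (π : Perm (Fin m)) (e : Fin (n+1) ↪ Fin m) :
    Mon F π e = monomial (Emon π e) 1 := by
  classical
  rw [Mon, Emon]
  exact prod_X_eq_monomial _ _

/-- The multilinear polynomial attached to a coefficient function on permutations. -/
noncomputable def pol (F : Type*) [Field F] {m : ℕ} (f : Perm (Fin m) → F) :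
    MvPolynomial (Fin m × Fin m) F :=
  ∑ μ : Perm (Fin m), C (f μ) * ∏ c, X (μ c, c)

lemma pol_gen (π : Perm (Fin m)) (e : Fin (n+1) ↪ Fin m) :
    pol F (gen F π e) = Mon F π e *
      Matrix.det ((genMatrix F m).submatrix (e.trans π.toEmbedding) e) := by
  classical
  rw [pol]
  have h1 : ∀ μ : Perm (Fin m), C (gen F π e μ) * ∏ c, X (μ c, c)
      = ∑ w : Perm (Fin (n+1)),
          if μ = π * w.viaEmbedding e then C (sgnF F w) * ∏ c, X (μ c, c) else 0 := by
    intro μ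
    rw [gen]
    rw [map_sum, Finset.sum_mul]
    apply Finset.sum_congr rfl
    intro w _
    rw [apply_ite C, map_zero, ite_mul, zero_mul]
  rw [Finset.sum_congr rfl (fun μ _ => h1 μ), Finset.sum_comm]
  have h2 : ∀ w : Perm (Fin (n+1)),
      (∑ μ : Perm (Fin m),
          if μ = π * w.viaEmbedding e then C (sgnF F w) * ∏ c, X (μ c, c) else 0)
        = C (sgnF F w) * ∏ c, X ((π * w.viaEmbedding e) c, c) := by
    intro w
    rw [Finset.sum_ite_eq' univ (π * w.viaEmbedding e)
      (fun μ => C (sgnF F w) * ∏ c, X (μ c, c))]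
    rw [if_pos (Finset.mem_univ _)]
  rw [Finset.sum_congr rfl (fun w _ => h2 w)]
  have h3 : ∀ w : Perm (Fin (n+1)),
      (∏ c, (X ((π * w.viaEmbedding e) c, c) : MvPolynomial (Fin m × Fin m) F))
        = Mon F π e * ∏ b : Fin (n+1), X (π (e (w b)), e b) := by
    intro w
    rw [← Finset.prod_filter_mul_prod_filter_not univ (fun c => c ∈ Set.range e)]
    rw [mul_comm]
    congr 1
    · -- complement part is Mon
      rw [Mon]
      apply Finset.prod_congr rfl
      intro c hc
      simp only [Finset.mem_filter, Finset.mem_univ, true_and] at hc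
      rw [Perm.mul_apply, Perm.viaEmbedding_apply_of_notMem _ _ _ hc]
    · -- range part is the det product
      refine (Finset.prod_bij (fun b _ => e b) ?_ ?_ ?_ ?_).symm
      · intro b _
        simp only [Finset.mem_filter, Finset.mem_univ, true_and]
        exact ⟨b, rfl⟩
      · intro b₁ _ b₂ _ hb
        exact e.injective hb
      · intro c hc
        simp only [Finset.mem_filter, Finset.mem_univ, true_and] at hc
        obtain ⟨b, rfl⟩ := hc
        exact ⟨b, Finset.mem_univ _, rfl⟩
      · intro b _
        rw [Perm.mul_apply, Perm.viaEmbedding_apply]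
  rw [Finset.sum_congr rfl (fun w _ => by rw [h3 w])]
  rw [Matrix.det_apply']
  rw [Finset.mul_sum]
  apply Finset.sum_congr rfl
  intro w _
  have hsub : ∀ a b, ((genMatrix F m).submatrix (e.trans π.toEmbedding) e) a b
      = X (π (e a), e b) := fun a b => rfl
  rw [Finset.prod_congr rfl (fun b _ => hsub (w b) b)]
  have hC : (C (sgnF F w) : MvPolynomial (Fin m × Fin m) F)
      = ((Perm.sign w : ℤ) : MvPolynomial (Fin m × Fin m) F) := by
    rw [sgnF, map_intCast]
  rw [hC]
  ring

lemma Emon_row (π : Perm (Fin m)) (e : Fin (n+1) ↪ Fin m) (r : Fin m) :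
    ∑ j : Fin m, Emon π e (r, j)
      = if r ∈ Set.range (e.trans π.toEmbedding) then 0 else 1 := by
  classical
  have happly : ∀ j : Fin m, Emon π e (r, j)
      = ∑ c ∈ univ.filter (fun c => c ∉ Set.range e),
          (if (π c, c) = (r, j) then 1 else 0) := by
    intro j
    rw [Emon, Finsupp.finset_sum_apply]
    apply Finset.sum_congr rfl
    intro c _
    rw [Finsupp.single_apply]
  rw [Finset.sum_congr rfl (fun j _ => happly j), Finset.sum_comm]
  have hinner : ∀ c : Fin m,
      (∑ j : Fin m, if (π c, c) = (r, j) then (1:ℕ) else 0)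
        = if c = π⁻¹ r then 1 else 0 := by
    intro c
    by_cases hc : π c = r
    · have hc' : c = π⁻¹ r := by rw [← hc, Perm.coe_inv, Equiv.symm_apply_apply]
      rw [if_pos hc']
      have : ∀ j : Fin m, ((π c, c) = (r, j)) = (c = j) := by
        intro j
        apply propext
        rw [Prod.mk.injEq]
        constructor
        · exact fun h => h.2
        · exact fun h => ⟨hc, h⟩
      simp only [this]
      rw [Finset.sum_ite_eq univ c (fun _ => (1:ℕ)), if_pos (Finset.mem_univ _)]
    · have hc' : ¬ (c = π⁻¹ r) := by
        intro h
        apply hc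
        rw [h, Perm.coe_inv, Equiv.apply_symm_apply]
      rw [if_neg hc']
      apply Finset.sum_eq_zero
      intro j _
      rw [if_neg]
      intro hcon
      rw [Prod.mk.injEq] at hcon
      exact hc hcon.1
  rw [Finset.sum_congr rfl (fun c _ => hinner c)]
  rw [Finset.sum_ite_eq' _ (π⁻¹ r) (fun _ => (1:ℕ))]
  have hiff : (π⁻¹ r ∈ univ.filter (fun c => c ∉ Set.range e))
      ↔ ¬ (r ∈ Set.range (e.trans π.toEmbedding)) := by
    simp only [Finset.mem_filter, Finset.mem_univ, true_and]
    constructor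
    · intro hnr hcon
      obtain ⟨b, hb⟩ := hcon
      apply hnr
      refine ⟨b, ?_⟩
      have : π (e b) = r := hb
      rw [← this, Perm.coe_inv, Equiv.symm_apply_apply]
    · intro hnr hcon
      obtain ⟨b, hb⟩ := hcon
      apply hnr
      refine ⟨b, ?_⟩
      show π (e b) = r
      rw [hb, Perm.coe_inv, Equiv.apply_symm_apply]
  by_cases hr : r ∈ Set.range (e.trans π.toEmbedding)
  · rw [if_pos hr, if_neg (fun hcon => (hiff.mp hcon) hr)]
  · rw [if_neg hr, if_pos (hiff.mpr hr)]

lemma Emon_col (π : Perm (Fin m)) (e : Fin (n+1) ↪ Fin m) (s' : Fin m) :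
    ∑ i : Fin m, Emon π e (i, s')
      = if s' ∈ Set.range e then 0 else 1 := by
  classical
  have happly : ∀ i : Fin m, Emon π e (i, s')
      = ∑ c ∈ univ.filter (fun c => c ∉ Set.range e),
          (if (π c, c) = (i, s') then 1 else 0) := by
    intro i
    rw [Emon, Finsupp.finset_sum_apply]
    apply Finset.sum_congr rfl
    intro c _
    rw [Finsupp.single_apply]
  rw [Finset.sum_congr rfl (fun i _ => happly i), Finset.sum_comm]
  have hinner : ∀ c : Fin m,
      (∑ i : Fin m, if (π c, c) = (i, s') then (1:ℕ) else 0)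
        = if c = s' then 1 else 0 := by
    intro c
    by_cases hc : c = s'
    · rw [if_pos hc]
      have : ∀ i : Fin m, ((π c, c) = (i, s')) = (π c = i) := by
        intro i
        apply propext
        rw [Prod.mk.injEq]
        constructor
        · exact fun h => h.1
        · exact fun h => ⟨h, hc⟩
      simp only [this]
      rw [Finset.sum_ite_eq univ (π c) (fun _ => (1:ℕ)), if_pos (Finset.mem_univ _)]
    · rw [if_neg hc]
      apply Finset.sum_eq_zero
      intro i _
      rw [if_neg]
      intro hcon
      rw [Prod.mk.injEq] at hcon
      exact hc hcon.2
  rw [Finset.sum_congr rfl (fun c _ => hinner c)]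
  rw [Finset.sum_ite_eq' _ s' (fun _ => (1:ℕ))]
  by_cases hs : s' ∈ Set.range e
  · rw [if_pos hs, if_neg (by
      simp only [Finset.mem_filter, Finset.mem_univ, true_and]
      exact fun hcon => hcon hs)]
  · rw [if_neg hs, if_pos (by
      simp only [Finset.mem_filter, Finset.mem_univ, true_and]
      exact hs)]

/-- The span of the generators is contained in the solutions of the linear conditions. -/
lemma star_closed (d : Perm (Fin m) → F) (hd : d ∈ gspan F m n) : Star F m n d := by
  classical
  let S : Submodule F (Perm (Fin m) → F) :=
    { carrier := {f | Star F m n f}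
      add_mem' := by
        intro a b ha hb
        intro h π
        simp only [Pi.add_apply]
        rw [Finset.sum_add_distrib, ha h π, hb h π, add_zero]
      zero_mem' := by
        intro h π
        simp
      smul_mem' := by
        intro c a ha
        intro h π
        simp only [Pi.smul_apply, smul_eq_mul]
        rw [← Finset.mul_sum, ha h π, mul_zero] }
  have hle : gspan F m n ≤ S := by
    rw [gspan, Submodule.span_le]
    rintro x ⟨γ, rfl⟩
    exact gen_star γ.1 γ.2
  exact hle hd

lemma pol_comb {ι : Type*} [Fintype ι] (a : ι → F) (g : ι → Perm (Fin m) → F) :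
    pol F (∑ γ : ι, a γ • g γ) = ∑ γ : ι, C (a γ) * pol F (g γ) := by
  classical
  rw [pol]
  have h1 : ∀ μ : Perm (Fin m),
      C ((∑ γ : ι, a γ • g γ) μ) * ∏ c, (X (μ c, c) : MvPolynomial (Fin m × Fin m) F)
        = ∑ γ : ι, C (a γ) * (C (g γ μ) * ∏ c, X (μ c, c)) := by
    intro μ
    rw [Finset.sum_apply, map_sum, Finset.sum_mul]
    apply Finset.sum_congr rfl
    intro γ _
    rw [Pi.smul_apply, smul_eq_mul, map_mul, mul_assoc]
  rw [Finset.sum_congr rfl (fun μ _ => h1 μ), Finset.sum_comm]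
  apply Finset.sum_congr rfl
  intro γ _
  rw [pol, Finset.mul_sum]

end SFT

theorem sft_multilinear_coefficients (F : Type*) [Field F] [IsAlgClosed F] [CharZero F]
    (m n : ℕ) (hm : n + 1 ≤ m) (f : Equiv.Perm (Fin m) → F)
    (q : MvPolynomial (Fin m × Fin m) F)
    (hq : q = ∑ π : Equiv.Perm (Fin m), MvPolynomial.C (f π) *
      ∏ i : Fin m, MvPolynomial.X (π i, i))
    (hvan : ∀ M : Matrix (Fin m) (Fin m) F, M.rank ≤ n →
      MvPolynomial.eval (fun p : Fin m × Fin m => M p.1 p.2) q = 0) :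
    ∃ c : (Fin (n + 1) ↪ Fin m) × (Fin (n + 1) ↪ Fin m) →
        MvPolynomial (Fin m × Fin m) F,
      q = ∑ IJ : (Fin (n + 1) ↪ Fin m) × (Fin (n + 1) ↪ Fin m),
            c IJ * Matrix.det ((genMatrix F m).submatrix IJ.1 IJ.2) ∧
      ∀ IJ, ∀ mon ∈ (c IJ).support,
        (∀ r : Fin m,
          (∑ j : Fin m, mon (r, j)) = if r ∈ Set.range IJ.1 then 0 else 1) ∧
        (∀ s : Fin m,
          (∑ i : Fin m, mon (i, s)) = if s ∈ Set.range IJ.2 then 0 else 1) := by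
  classical
  open SFT Finset Equiv in
  -- Step 1: the linear conditions
  have hstar : Star F m n f := by
    apply star_of_vanishing
    intro M hM
    have := hvan M hM
    rwa [hq] at this
  -- Step 2: straightening
  obtain ⟨d, hdmem, hdsupp⟩ := straighten_aux ((m+1)^m) f
    (fun μ _ _ => phi_lt_top μ)
  -- Step 3: the difference satisfies the conditions and is supported on bounded perms
  have hdstar : Star F m n d := star_closed d hdmem
  have hsubstar : Star F m n (f - d) := by
    intro h π
    simp only [Pi.sub_apply]
    rw [Finset.sum_sub_distrib, hstar h π, hdstar h π, sub_zero]
  have hzero : f - d = 0 := indep hm (f - d) hsubstar hdsupp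
  have hfd : f = d := sub_eq_zero.mp hzero
  have hfmem : f ∈ gspan F m n := hfd ▸ hdmem
  -- Step 4: representation as a combination of generators
  rw [gspan] at hfmem
  obtain ⟨a, ha⟩ := (Submodule.mem_span_range_iff_exists_fun F).mp hfmem
  -- Step 5: package
  set key : Perm (Fin m) × (Fin (n+1) ↪ Fin m) →
      (Fin (n + 1) ↪ Fin m) × (Fin (n + 1) ↪ Fin m) :=
    fun γ => (γ.2.trans γ.1.toEmbedding, γ.2) with hkey
  refine ⟨fun IJ => ∑ γ ∈ univ.filter (fun γ => key γ = IJ),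
      MvPolynomial.monomial (Emon γ.1 γ.2) (a γ), ?_, ?_⟩
  · -- the decomposition
    have hq' : q = pol F f := hq
    rw [hq', ← ha, pol_comb]
    have h1 : ∀ γ : Perm (Fin m) × (Fin (n+1) ↪ Fin m),
        C (a γ) * pol F (gen F γ.1 γ.2)
          = (monomial (Emon γ.1 γ.2) (a γ)) *
              Matrix.det ((genMatrix F m).submatrix (key γ).1 (key γ).2) := by
      intro γ
      rw [pol_gen γ.1 γ.2, Mon_eq_monomial, ← mul_assoc, MvPolynomial.C_mul_monomial,
        mul_one]
    rw [Finset.sum_congr rfl (fun γ _ => h1 γ)]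
    rw [← Finset.sum_fiberwise univ key
      (fun γ => (monomial (Emon γ.1 γ.2) (a γ)) *
        Matrix.det ((genMatrix F m).submatrix (key γ).1 (key γ).2))]
    apply Finset.sum_congr rfl
    intro IJ _
    rw [Finset.sum_mul]
    apply Finset.sum_congr rfl
    intro γ hγ
    simp only [Finset.mem_filter, Finset.mem_univ, true_and] at hγ
    rw [hγ]
  · -- support conditions
    intro IJ mon hmon
    have hsub := MvPolynomial.support_sum hmon
    rw [Finset.mem_biUnion] at hsub
    obtain ⟨γ, hγmem, hγsup⟩ := hsub
    simp only [Finset.mem_filter, Finset.mem_univ, true_and] at hγmem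
    have hmon' : mon = Emon γ.1 γ.2 := by
      have h := MvPolynomial.support_monomial (s := Emon γ.1 γ.2) (a := a γ)
        (h := Classical.dec _) ▸ hγsup
      by_cases hz : a γ = 0
      · rw [MvPolynomial.support_monomial] at hγsup
        rw [if_pos hz] at hγsup
        exact absurd hγsup (Finset.notMem_empty _)
      · rw [MvPolynomial.support_monomial] at hγsup
        rw [if_neg hz] at hγsup
        exact Finset.mem_singleton.mp hγsup
    subst hmon'
    have hI : IJ.1 = γ.2.trans γ.1.toEmbedding := by rw [← hγmem]
    have hJ : IJ.2 = γ.2 := by rw [← hγmem]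
    constructor
    · intro r
      rw [hI]
      exact Emon_row γ.1 γ.2 r
    · intro s
      rw [hJ]
      exact Emon_col γ.1 γ.2 s
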